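/- Let C < 0 < R be real numbers and let D ∈ ℂ with Im(D) ≠ 0. Then the Euler substitution √((x − C)(x − R)) = x + t transforms the integral as follows: ∫_R^∞ dx / ( (x − D) √((x − C)(x − R)) ) = ∫_{−R}^{−(C+R)/2} 2 dt / ( t² + 2Dt + C(D − R) + DR ), where on the left the square root is the positive real square root and both integrals are complex-valued integrals over a real variable; in particular −R < −(C+R)/2 and the quadratic t² + 2Dt + C(D − R) + DR = (t − r⁺)(t − r⁻), with r^± := −D ± √((D − C)(D − R)), has no real roots, so the right-hand integrand is continuous on the interval of integration. -/

import Mathlib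

open MeasureTheory

/-- Euler substitution: for C < 0 < R and D ∈ ℂ with Im(D) ≠ 0,
∫_R^∞ dx/((x−D)√((x−C)(x−R))) = ∫_{−R}^{−(C+R)/2} 2dt/(t² + 2Dt + C(D−R) + DR);
moreover −R < −(C+R)/2, the quadratic factors as (t − r⁺)(t − r⁻) with
r^± = −D ± √((D−C)(D−R)), and it has no real roots. -/
theorem euler_substitution_integral
    (C R : ℝ) (hC : C < 0) (hR : 0 < R)
    (D : ℂ) (hD : D.im ≠ 0)
    (rp rm : ℂ)
    (hrp : rp = -D + ((D - (C : ℂ)) * (D - (R : ℂ))) ^ (1 / 2 : ℂ))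
    (hrm : rm = -D - ((D - (C : ℂ)) * (D - (R : ℂ))) ^ (1 / 2 : ℂ)) :
    (-R < -(C + R) / 2) ∧
    (∀ t : ℂ, t ^ 2 + 2 * D * t + (C : ℂ) * (D - (R : ℂ)) + D * (R : ℂ) =
      (t - rp) * (t - rm)) ∧
    (∀ t : ℝ, ((t : ℂ)) ^ 2 + 2 * D * (t : ℂ) + (C : ℂ) * (D - (R : ℂ)) + D * (R : ℂ) ≠ 0) ∧
    (∫ x in Set.Ioi R,
        (((x : ℂ) - D) * ((Real.sqrt ((x - C) * (x - R)) : ℝ) : ℂ))⁻¹) =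
      ∫ t in (-R)..(-(C + R) / 2),
        2 / (((t : ℂ)) ^ 2 + 2 * D * (t : ℂ) + (C : ℂ) * (D - (R : ℂ)) + D * (R : ℂ)) := by
  have hCR : C < R := hC.trans hR
  have hQ : ∀ t : ℝ, ((t : ℂ)) ^ 2 + 2 * D * (t : ℂ) + (C : ℂ) * (D - (R : ℂ)) + D * (R : ℂ) ≠ 0 := by
    intro t h
    have h1 := congrArg Complex.re h
    have h2 := congrArg Complex.im h
    simp [pow_two, Complex.mul_re, Complex.mul_im, Complex.add_re, Complex.add_im,
      Complex.sub_re, Complex.sub_im] at h1 h2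
    have h3 : D.im * (2 * t + C + R) = 0 := by linarith
    have h4 : 2 * t + C + R = 0 := by
      rcases mul_eq_zero.mp h3 with h | h
      · exact absurd h hD
      · exact h
    have h5 : D.re * (2 * t + C + R) = 0 := by rw [h4]; ring
    nlinarith [h5, mul_neg_of_neg_of_pos hC hR, mul_self_nonneg t]
  refine ⟨by linarith, ?_, hQ, ?_⟩
  · intro t
    have hsq : ((((D - (C : ℂ)) * (D - (R : ℂ))) ^ (1 / 2 : ℂ)) ^ (2 : ℕ)) =
        (D - (C : ℂ)) * (D - (R : ℂ)) := by
      rw [show (1 / 2 : ℂ) = ((2 : ℕ) : ℂ)⁻¹ by norm_num]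
      exact Complex.cpow_nat_inv_pow _ two_ne_zero
    subst hrp hrm
    linear_combination hsq
  · clear hCR
    have hCR : C < R := hC.trans hR
    set a : ℝ := -R with ha
    set b : ℝ := -(C + R) / 2 with hb
    have hab : a < b := by rw [ha, hb]; linarith
    set f : ℝ → ℝ := fun t => (C * R - t ^ 2) / (2 * t + C + R) with hf
    set f' : ℝ → ℝ := fun t => (-2 * (t + C) * (t + R)) / (2 * t + C + R) ^ 2 with hf'
    set s : Set ℝ := Set.Ioo a b with hs
    have hds : ∀ t ∈ s, 2 * t + C + R < 0 := by
      rintro t ⟨h1, h2⟩; rw [hb] at h2; linarith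
    have htC : ∀ t ∈ s, t + C < 0 := by
      rintro t ⟨h1, h2⟩; rw [hb] at h2; linarith
    have htR : ∀ t ∈ s, 0 < t + R := by
      rintro t ⟨h1, h2⟩; rw [ha] at h1; linarith
    have hft : ∀ t ∈ s, f t * (2 * t + C + R) = C * R - t ^ 2 := by
      intro t ht; rw [hf]; exact div_mul_cancel₀ _ (hds t ht).ne
    -- derivative
    have hder : ∀ t ∈ s, HasDerivAt f (f' t) t := by
      intro t ht
      have hd := (hds t ht).ne
      have h1 : HasDerivAt (fun t : ℝ => C * R - t ^ 2) (-(2 * t)) t := by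
        simpa using ((hasDerivAt_pow 2 t).const_sub (C * R))
      have h2 : HasDerivAt (fun t : ℝ => 2 * t + C + R) 2 t := by
        simpa [add_assoc] using (((hasDerivAt_id t).const_mul 2).add_const (C + R))
      have := h1.div h2 hd
      refine this.congr_deriv ?_
      show _ = -2 * (t + C) * (t + R) / (2 * t + C + R) ^ 2
      congr 1
      ring
    -- injectivity
    have hinj : Set.InjOn f s := by
      intro x hx y hy hxy
      have hdx := (hds x hx).ne
      have hdy := (hds y hy).ne
      rw [hf] at hxy
      simp only at hxy
      rw [div_eq_div_iff hdx hdy] at hxy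
      have key : (y - x) * ((x + C) * (y + R) + (x + R) * (y + C)) = 0 := by
        linear_combination hxy
      have hneg : (x + C) * (y + R) + (x + R) * (y + C) < 0 := by
        nlinarith [mul_pos (neg_pos.mpr (htC x hx)) (htR y hy),
          mul_pos (htR x hx) (neg_pos.mpr (htC y hy))]
      rcases mul_eq_zero.mp key with h | h
      · linarith
      · exact absurd h hneg.ne
    -- image
    have himg : f '' s = Set.Ioi R := by
      ext x
      constructor
      · rintro ⟨t, ht, rfl⟩
        have hd := hds t ht
        simp only [Set.mem_Ioi]
        nlinarith [hft t ht, mul_pos (htR t ht) (htR t ht), htR t ht]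
      · intro hx
        simp only [Set.mem_Ioi] at hx
        set u : ℝ := Real.sqrt ((x - C) * (x - R)) with hu
        have hprod : 0 ≤ (x - C) * (x - R) := by nlinarith
        have hu2 : u ^ 2 = (x - C) * (x - R) := Real.sq_sqrt hprod
        have hupos : 0 ≤ u := Real.sqrt_nonneg _
        have hgt : x - R < u := by
          rw [hu, show (x - C) * (x - R) = (x - R) ^ 2 + (R - C) * (x - R) by ring]
          rw [Real.lt_sqrt (by linarith)]
          nlinarith
        have hlt : u < (2 * x - C - R) / 2 := by
          rw [hu, show ((2 * x - C - R) / 2 : ℝ) = Real.sqrt (((2 * x - C - R) / 2) ^ 2) from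
            (Real.sqrt_sq (by linarith)).symm]
          apply Real.sqrt_lt_sqrt hprod
          nlinarith
        have hd : 2 * (u - x) + C + R < 0 := by linarith
        refine ⟨u - x, ?_, ?_⟩
        · rw [hs, Set.mem_Ioo, ha, hb]; constructor <;> linarith
        · rw [hf]; simp only
          rw [div_eq_iff hd.ne]
          linear_combination -hu2
    -- change of variables
    have hchg := integral_image_eq_integral_abs_deriv_smul measurableSet_Ioo
      (fun t ht => (hder t ht).hasDerivWithinAt) hinj
      (fun x : ℝ => (((x : ℂ) - D) * ((Real.sqrt ((x - C) * (x - R)) : ℝ) : ℂ))⁻¹)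
    rw [← himg, hchg]
    rw [intervalIntegral.integral_of_le hab.le, MeasureTheory.integral_Ioc_eq_integral_Ioo]
    apply MeasureTheory.setIntegral_congr_fun measurableSet_Ioo
    intro t ht
    simp only
    have hd := hds t ht
    have hnum : (t + C) * (t + R) < 0 := mul_neg_of_neg_of_pos (htC t ht) (htR t ht)
    have hfp : 0 < f' t := by
      rw [hf']
      apply div_pos (by nlinarith) (pow_pos (abs_pos.mpr hd.ne) 2 |>.trans_eq (sq_abs _))
    have hsumpos : 0 < f t + t := by nlinarith [hft t ht]
    have hsq : (f t - C) * (f t - R) = (f t + t) ^ 2 := by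
      linear_combination -(hft t ht)
    rw [hsq, Real.sqrt_sq hsumpos.le, abs_of_pos hfp, Complex.real_smul]
    have hfteq : ((f t : ℝ) : ℂ) = (C * R - (t:ℂ) ^ 2) / (2 * (t:ℂ) + C + R) := by
      rw [hf]; push_cast; ring
    have hsumeq : ((f t + t : ℝ) : ℂ) = ((t:ℂ) + C) * ((t:ℂ) + R) / (2 * (t:ℂ) + C + R) := by
      push_cast [hfteq]
      rw [div_add' _ _ _ (by exact_mod_cast hd.ne)]
      congr 1
      ring
    have hfpeq : ((f' t : ℝ) : ℂ) = -2 * ((t:ℂ) + C) * ((t:ℂ) + R) / (2 * (t:ℂ) + C + R) ^ 2 := by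
      rw [hf']; push_cast; ring
    have hdC : (2 * (t:ℂ) + C + R) ≠ 0 := by exact_mod_cast hd.ne
    have hnC : ((t:ℂ) + C) * ((t:ℂ) + R) ≠ 0 := by exact_mod_cast hnum.ne
    have hQt := hQ t
    have hnum2 : (C * R : ℂ) - (t:ℂ) ^ 2 - D * (2 * (t:ℂ) + C + R) ≠ 0 := by
      intro h; apply hQ t; linear_combination -h
    push_cast
    rw [hfpeq, hfteq]
    have e1 : ((C:ℂ) * R - (t:ℂ) ^ 2) / (2 * t + C + R) - D =
        (-((t:ℂ) ^ 2 + 2 * D * t + C * (D - R) + D * R)) / (2 * (t:ℂ) + C + R) := by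
      rw [eq_div_iff hdC, sub_mul, div_mul_cancel₀ _ hdC]; ring
    have e2 : ((C:ℂ) * R - (t:ℂ) ^ 2) / (2 * t + C + R) + t =
        (((t:ℂ) + C) * ((t:ℂ) + R)) / (2 * (t:ℂ) + C + R) := by
      rw [eq_div_iff hdC, add_mul, div_mul_cancel₀ _ hdC]; ring
    have hQ' : -((t:ℂ) ^ 2 + 2 * D * t + C * (D - R) + D * R) * (((t:ℂ) + C) * ((t:ℂ) + R)) ≠ 0 :=
      mul_ne_zero (neg_ne_zero.mpr hQt) hnC
    rw [e1, e2, div_mul_div_comm, inv_div, div_mul_div_comm, div_eq_div_iff (by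
        exact mul_ne_zero (pow_ne_zero 2 hdC) hQ') hQt]
    ring
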